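/- Let X ~ C(a,γ), a₀ ∈ ℝ, γ₀ > 0, and set X₀ = (X - a₀)/γ₀. Then E(1/(1+X₀²)) = γ₀(γ + γ₀) / ((a - a₀)² + (γ + γ₀)²) and E(X₀/(1+X₀²)) = γ₀(a - a₀) / ((a - a₀)² + (γ + γ₀)²). -/

import Mathlib

set_option maxHeartbeats 2000000

open MeasureTheory Real
open Filter Topology

lemma sq_add_pos (a γ x : ℝ) (hγ : 0 < γ) : 0 < (x - a) ^ 2 + γ ^ 2 := by positivity

lemma integrable_inv_sq_add (a γ : ℝ) (hγ : 0 < γ) :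
    Integrable (fun x : ℝ => ((x - a) ^ 2 + γ ^ 2)⁻¹) := by
  have h1 : Integrable (fun x : ℝ => (1 + (x / γ) ^ 2)⁻¹) :=
    integrable_inv_one_add_sq.comp_div hγ.ne'
  have h2 : Integrable (fun x : ℝ => (1 + ((x - a) / γ) ^ 2)⁻¹) := h1.comp_sub_right a
  refine (h2.const_mul (γ ^ 2)⁻¹).congr (Eventually.of_forall fun x => ?_)
  have h := sq_add_pos a γ x hγ
  field_simp
  ring

lemma cont_aux (a γ : ℝ) (hγ : 0 < γ) (g : ℝ → ℝ) (hg : Continuous g) :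
    Continuous (fun x : ℝ => g x / ((x - a) ^ 2 + γ ^ 2)) := by
  apply hg.div (by continuity)
  intro x; exact (sq_add_pos a γ x hγ).ne'

-- limits via inversion
lemma tendsto_inv_sq_add (a γ : ℝ) (hγ : 0 < γ) (l : Filter ℝ)
    (hl : Tendsto (fun x : ℝ => x⁻¹) l (𝓝 0)) (hne : ∀ᶠ x in l, x ≠ 0) :
    Tendsto (fun x : ℝ => ((x - a) ^ 2 + γ ^ 2)⁻¹) l (𝓝 0) := by
  have hcont : ContinuousAt (fun u : ℝ => u ^ 2 / ((1 - a * u) ^ 2 + (γ * u) ^ 2)) 0 := by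
    apply ContinuousAt.div (by fun_prop) (by fun_prop)
    norm_num
  have htend : Tendsto (fun u : ℝ => u ^ 2 / ((1 - a * u) ^ 2 + (γ * u) ^ 2)) (𝓝 0) (𝓝 0) := by
    have := hcont.tendsto
    norm_num at this
    exact this
  have := htend.comp hl
  refine this.congr' ?_
  filter_upwards [hne] with x hx
  have h := (sq_add_pos a γ x hγ).ne'
  have h2 : (1 - a * x⁻¹) ^ 2 + (γ * x⁻¹) ^ 2 = ((x - a) ^ 2 + γ ^ 2) * (x⁻¹) ^ 2 := by
    field_simp
  simp only [Function.comp]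
  rw [h2]
  field_simp

lemma tendsto_lin_div_sq_add (a γ : ℝ) (hγ : 0 < γ) (l : Filter ℝ)
    (hl : Tendsto (fun x : ℝ => x⁻¹) l (𝓝 0)) (hne : ∀ᶠ x in l, x ≠ 0) :
    Tendsto (fun x : ℝ => (x - a) / ((x - a) ^ 2 + γ ^ 2)) l (𝓝 0) := by
  have hcont : ContinuousAt (fun u : ℝ => u * (1 - a * u) / ((1 - a * u) ^ 2 + (γ * u) ^ 2)) 0 := by
    apply ContinuousAt.div (by fun_prop) (by fun_prop)
    norm_num
  have htend : Tendsto (fun u : ℝ => u * (1 - a * u) / ((1 - a * u) ^ 2 + (γ * u) ^ 2))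
      (𝓝 0) (𝓝 0) := by
    have := hcont.tendsto
    norm_num at this
    exact this
  have := htend.comp hl
  refine this.congr' ?_
  filter_upwards [hne] with x hx
  have h := (sq_add_pos a γ x hγ).ne'
  have h2 : (1 - a * x⁻¹) ^ 2 + (γ * x⁻¹) ^ 2 = ((x - a) ^ 2 + γ ^ 2) * (x⁻¹) ^ 2 := by
    field_simp
  simp only [Function.comp]
  rw [h2]
  field_simp

lemma tendsto_logratio (a γ b δ : ℝ) (hγ : 0 < γ) (hδ : 0 < δ) (l : Filter ℝ)
    (hl : Tendsto (fun x : ℝ => x⁻¹) l (𝓝 0)) (hne : ∀ᶠ x in l, x ≠ 0) :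
    Tendsto (fun x : ℝ => Real.log ((x - a) ^ 2 + γ ^ 2) - Real.log ((x - b) ^ 2 + δ ^ 2))
      l (𝓝 0) := by
  have hcont : ContinuousAt
      (fun u : ℝ => ((1 - a * u) ^ 2 + (γ * u) ^ 2) / ((1 - b * u) ^ 2 + (δ * u) ^ 2)) 0 := by
    apply ContinuousAt.div (by fun_prop) (by fun_prop)
    norm_num
  have htend : Tendsto
      (fun u : ℝ => ((1 - a * u) ^ 2 + (γ * u) ^ 2) / ((1 - b * u) ^ 2 + (δ * u) ^ 2))
      (𝓝 0) (𝓝 1) := by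
    have := hcont.tendsto
    norm_num at this
    exact this
  have hratio : Tendsto (fun x : ℝ => ((x - a) ^ 2 + γ ^ 2) / ((x - b) ^ 2 + δ ^ 2)) l (𝓝 1) := by
    refine (htend.comp hl).congr' ?_
    filter_upwards [hne] with x hx
    have h1 := (sq_add_pos a γ x hγ).ne'
    have h2 := (sq_add_pos b δ x hδ).ne'
    simp only [Function.comp]
    field_simp
  have hlog : Tendsto (fun y : ℝ => Real.log y) (𝓝 1) (𝓝 0) := by
    simpa using (Real.continuousAt_log one_ne_zero).tendsto
  have := hlog.comp hratio
  refine this.congr (fun x => ?_)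
  simp only [Function.comp]
  rw [Real.log_div (sq_add_pos a γ x hγ).ne' (sq_add_pos b δ x hδ).ne']

lemma tendsto_arctan_comp_atTop (a γ : ℝ) (hγ : 0 < γ) :
    Tendsto (fun x : ℝ => arctan ((x - a) / γ)) atTop (𝓝 (π / 2)) := by
  have h1 : Tendsto (fun x : ℝ => (x - a) / γ) atTop atTop :=
    (tendsto_atTop_add_const_right _ (-a) tendsto_id).atTop_div_const hγ |>.congr
      (fun x => by simp [sub_div]; ring)
  exact (tendsto_nhds_of_tendsto_nhdsWithin tendsto_arctan_atTop).comp h1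

lemma tendsto_arctan_comp_atBot (a γ : ℝ) (hγ : 0 < γ) :
    Tendsto (fun x : ℝ => arctan ((x - a) / γ)) atBot (𝓝 (-(π / 2))) := by
  have h1 : Tendsto (fun x : ℝ => (x - a) / γ) atBot atBot :=
    (tendsto_atBot_add_const_right _ (-a) tendsto_id).atBot_div_const hγ |>.congr
      (fun x => by simp [sub_div]; ring)
  exact (tendsto_nhds_of_tendsto_nhdsWithin tendsto_arctan_atBot).comp h1

lemma integrable_key (p q a b γ δ : ℝ) (hγ : 0 < γ) (hδ : 0 < δ) :
    Integrable (fun x : ℝ =>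
      (p * x + q) / (((x - a) ^ 2 + γ ^ 2) * ((x - b) ^ 2 + δ ^ 2))) := by
  set C : ℝ := (|p| * δ + 2 * |p * b + q|) / (2 * δ ^ 2) with hC
  refine Integrable.mono' ((integrable_inv_sq_add a γ hγ).const_mul C) ?_
    (Eventually.of_forall fun x => ?_)
  · apply Continuous.aestronglyMeasurable
    exact Continuous.div (by fun_prop) (by fun_prop)
      (fun x => (mul_pos (sq_add_pos a γ x hγ) (sq_add_pos b δ x hδ)).ne')
  · have hP := sq_add_pos a γ x hγ
    have hQ := sq_add_pos b δ x hδ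
    have h1 : 2 * δ * |x - b| ≤ (x - b) ^ 2 + δ ^ 2 := by
      nlinarith [sq_nonneg (|x - b| - δ), sq_abs (x - b)]
    have h2 : δ ^ 2 ≤ (x - b) ^ 2 + δ ^ 2 := by nlinarith [sq_nonneg (x - b)]
    have hnum : |p * x + q| ≤ C * ((x - b) ^ 2 + δ ^ 2) := by
      have e1 : |p * x + q| ≤ |p| * |x - b| + |p * b + q| := by
        calc |p * x + q| = |p * (x - b) + (p * b + q)| := by ring_nf
          _ ≤ |p * (x - b)| + |p * b + q| := abs_add_le _ _
          _ = |p| * |x - b| + |p * b + q| := by rw [abs_mul]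
      refine e1.trans ?_
      rw [hC, div_mul_eq_mul_div, le_div_iff₀ (by positivity)]
      nlinarith [mul_nonneg (mul_nonneg (abs_nonneg p) hδ.le) (sub_nonneg.2 h1),
        mul_nonneg (abs_nonneg (p * b + q)) (sub_nonneg.2 h2)]
    have hCnn : 0 ≤ C := by positivity
    have hnorm : ‖(p * x + q) / (((x - a) ^ 2 + γ ^ 2) * ((x - b) ^ 2 + δ ^ 2))‖
        = |p * x + q| / (((x - a) ^ 2 + γ ^ 2) * ((x - b) ^ 2 + δ ^ 2)) := by
      rw [Real.norm_eq_abs, abs_div, abs_of_pos (mul_pos hP hQ)]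
    rw [hnorm, div_le_iff₀ (mul_pos hP hQ)]
    have e2 : C * ((x - a) ^ 2 + γ ^ 2)⁻¹ * (((x - a) ^ 2 + γ ^ 2) * ((x - b) ^ 2 + δ ^ 2))
        = C * ((x - b) ^ 2 + δ ^ 2) := by field_simp
    rw [e2]
    exact hnum

lemma hasDerivAt_sq_add (a γ x : ℝ) :
    HasDerivAt (fun y : ℝ => (y - a) ^ 2 + γ ^ 2) (2 * (x - a)) x := by
  have h := (((hasDerivAt_id x).sub_const a).pow 2).add_const (γ ^ 2)
  refine h.congr_deriv (Eq.symm ?_)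
  simp

lemma hasDerivAt_arctan_aff (a γ x : ℝ) (hγ : 0 < γ) :
    HasDerivAt (fun y : ℝ => arctan ((y - a) / γ)) (γ / ((x - a) ^ 2 + γ ^ 2)) x := by
  have hinner : HasDerivAt (fun y : ℝ => (y - a) / γ) (1 / γ) x := by
    simpa using ((hasDerivAt_id x).sub_const a).div_const γ
  have h := (Real.hasDerivAt_arctan ((x - a) / γ)).comp x hinner
  refine h.congr_deriv (Eq.symm ?_)
  have h2 := (sq_add_pos a γ x hγ).ne'
  have hγ' := hγ.ne'
  field_simp
  ring

lemma tendsto_inv_atBot_zero' : Tendsto (fun x : ℝ => x⁻¹) atBot (𝓝 0) := by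
  have h1 : Tendsto (fun x : ℝ => (-x)⁻¹) atBot (𝓝 0) :=
    tendsto_inv_atTop_zero.comp tendsto_neg_atBot_atTop
  have h2 := h1.neg
  simp only [neg_inv, neg_neg, neg_zero] at h2
  exact h2

lemma key_nondeg (p q a b γ δ : ℝ) (hγ : 0 < γ) (hδ : 0 < δ)
    (hD : (a - b) ^ 2 + (γ - δ) ^ 2 ≠ 0) :
    ∫ x : ℝ, (p * x + q) / (((x - a) ^ 2 + γ ^ 2) * ((x - b) ^ 2 + δ ^ 2)) =
      π * (q * (γ + δ) + p * (δ * a + γ * b)) / (γ * δ * ((a - b) ^ 2 + (γ + δ) ^ 2)) := by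
  have hs1 : (0:ℝ) < (a - b) ^ 2 + (γ + δ) ^ 2 := by positivity
  set D0 : ℝ := ((a - b) ^ 2 + (γ + δ) ^ 2) * ((a - b) ^ 2 + (γ - δ) ^ 2) with hD0
  have hD0ne : D0 ≠ 0 := mul_ne_zero hs1.ne' hD
  set A : ℝ := p * ((a - b) ^ 2 + δ ^ 2 - γ ^ 2) - 2 * (a - b) * (p * a + q) with hA
  set B : ℝ := (p * a + q) * ((a - b) ^ 2 + δ ^ 2 - γ ^ 2) + 2 * (a - b) * p * γ ^ 2 with hB
  set B' : ℝ := (p * b + q) * ((a - b) ^ 2 + γ ^ 2 - δ ^ 2) - 2 * (a - b) * p * δ ^ 2 with hB'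
  have hpoly : ∀ x : ℝ,
      A * (x - a) * ((x - b) ^ 2 + δ ^ 2) - A * (x - b) * ((x - a) ^ 2 + γ ^ 2)
        + B * ((x - b) ^ 2 + δ ^ 2) + B' * ((x - a) ^ 2 + γ ^ 2) = D0 * (p * x + q) := by
    intro x
    rw [hA, hB, hB', hD0]
    ring
  have hval : B * δ + B' * γ
      = (q * (γ + δ) + p * (δ * a + γ * b)) * ((a - b) ^ 2 + (γ - δ) ^ 2) := by
    rw [hB, hB']
    ring
  set F : ℝ → ℝ := fun x => (A / 2 * (Real.log ((x - a) ^ 2 + γ ^ 2)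
      - Real.log ((x - b) ^ 2 + δ ^ 2))
    + (B / γ) * arctan ((x - a) / γ) + (B' / δ) * arctan ((x - b) / δ)) / D0 with hF
  have hderiv : ∀ x : ℝ, HasDerivAt F
      ((p * x + q) / (((x - a) ^ 2 + γ ^ 2) * ((x - b) ^ 2 + δ ^ 2))) x := by
    intro x
    have hP := sq_add_pos a γ x hγ
    have hQ := sq_add_pos b δ x hδ
    have h1 := ((hasDerivAt_sq_add a γ x).log hP.ne').sub
      ((hasDerivAt_sq_add b δ x).log hQ.ne')
    have h3 := hasDerivAt_arctan_aff a γ x hγ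
    have h4 := hasDerivAt_arctan_aff b δ x hδ
    have hFd := (((h1.const_mul (A / 2)).add (h3.const_mul (B / γ))).add
      (h4.const_mul (B' / δ))).div_const D0
    refine hFd.congr_deriv (Eq.symm ?_)
    rw [div_eq_div_iff (mul_pos hP hQ).ne' hD0ne]
    field_simp [hP.ne', hQ.ne', hγ.ne', hδ.ne']
    linear_combination 2 * (((x - a) ^ 2 + γ ^ 2) * ((x - b) ^ 2 + δ ^ 2)) ^ 2 * hpoly x
  have htop : Tendsto F atTop
      (𝓝 ((A / 2 * 0 + (B / γ) * (π / 2) + (B' / δ) * (π / 2)) / D0)) := by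
    exact ((((tendsto_logratio a γ b δ hγ hδ atTop tendsto_inv_atTop_zero
        (eventually_ne_atTop 0)).const_mul (A / 2)).add
      ((tendsto_arctan_comp_atTop a γ hγ).const_mul (B / γ))).add
      ((tendsto_arctan_comp_atTop b δ hδ).const_mul (B' / δ))).div_const D0
  have hbot : Tendsto F atBot
      (𝓝 ((A / 2 * 0 + (B / γ) * (-(π / 2)) + (B' / δ) * (-(π / 2))) / D0)) := by
    exact ((((tendsto_logratio a γ b δ hγ hδ atBot tendsto_inv_atBot_zero'
        (eventually_ne_atBot 0)).const_mul (A / 2)).add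
      ((tendsto_arctan_comp_atBot a γ hγ).const_mul (B / γ))).add
      ((tendsto_arctan_comp_atBot b δ hδ).const_mul (B' / δ))).div_const D0
  rw [integral_of_hasDerivAt_of_tendsto hderiv (integrable_key p q a b γ δ hγ hδ) hbot htop]
  rw [hD0]
  field_simp [hγ.ne', hδ.ne', hs1.ne', hD]
  linear_combination 4 * π * γ * δ * ((a - b) ^ 2 + (γ + δ) ^ 2) * hval

lemma key_deg (p q a γ : ℝ) (hγ : 0 < γ) :
    ∫ x : ℝ, (p * x + q) / (((x - a) ^ 2 + γ ^ 2) * ((x - a) ^ 2 + γ ^ 2)) =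
      π * (p * a + q) / (2 * γ ^ 3) := by
  set F : ℝ → ℝ := fun x => (-(p / 2)) * ((x - a) ^ 2 + γ ^ 2)⁻¹
    + (p * a + q) * (((x - a) / ((x - a) ^ 2 + γ ^ 2)) / (2 * γ ^ 2)
      + arctan ((x - a) / γ) / (2 * γ ^ 3)) with hF
  have hderiv : ∀ x : ℝ, HasDerivAt F
      ((p * x + q) / (((x - a) ^ 2 + γ ^ 2) * ((x - a) ^ 2 + γ ^ 2))) x := by
    intro x
    have hP := sq_add_pos a γ x hγ
    have hinv := (hasDerivAt_sq_add a γ x).inv hP.ne'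
    have hq : HasDerivAt (fun y : ℝ => (y - a) / ((y - a) ^ 2 + γ ^ 2))
        ((1 * ((x - a) ^ 2 + γ ^ 2) - (x - a) * (2 * (x - a)))
          / ((x - a) ^ 2 + γ ^ 2) ^ 2) x :=
      ((hasDerivAt_id x).sub_const a).div (hasDerivAt_sq_add a γ x) hP.ne'
    have harct := hasDerivAt_arctan_aff a γ x hγ
    have hFd := (hinv.const_mul (-(p / 2))).add
      (((hq.div_const (2 * γ ^ 2)).add (harct.div_const (2 * γ ^ 3))).const_mul (p * a + q))
    refine hFd.congr_deriv (Eq.symm ?_)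
    have hγ' := hγ.ne'
    field_simp [hP.ne']
    ring
  have htop : Tendsto F atTop
      (𝓝 ((-(p / 2)) * 0 + (p * a + q) * (0 / (2 * γ ^ 2) + (π / 2) / (2 * γ ^ 3)))) := by
    exact ((tendsto_inv_sq_add a γ hγ atTop tendsto_inv_atTop_zero
        (eventually_ne_atTop 0)).const_mul (-(p / 2))).add
      ((((tendsto_lin_div_sq_add a γ hγ atTop tendsto_inv_atTop_zero
          (eventually_ne_atTop 0)).div_const (2 * γ ^ 2)).add
        ((tendsto_arctan_comp_atTop a γ hγ).div_const (2 * γ ^ 3))).const_mul (p * a + q))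
  have hbot : Tendsto F atBot
      (𝓝 ((-(p / 2)) * 0 + (p * a + q) * (0 / (2 * γ ^ 2) + (-(π / 2)) / (2 * γ ^ 3)))) := by
    exact ((tendsto_inv_sq_add a γ hγ atBot tendsto_inv_atBot_zero'
        (eventually_ne_atBot 0)).const_mul (-(p / 2))).add
      ((((tendsto_lin_div_sq_add a γ hγ atBot tendsto_inv_atBot_zero'
          (eventually_ne_atBot 0)).div_const (2 * γ ^ 2)).add
        ((tendsto_arctan_comp_atBot a γ hγ).div_const (2 * γ ^ 3))).const_mul (p * a + q))
  rw [integral_of_hasDerivAt_of_tendsto hderiv (integrable_key p q a a γ γ hγ hγ) hbot htop]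
  have hγ' := hγ.ne'
  field_simp
  ring

lemma key (p q a b γ δ : ℝ) (hγ : 0 < γ) (hδ : 0 < δ) :
    ∫ x : ℝ, (p * x + q) / (((x - a) ^ 2 + γ ^ 2) * ((x - b) ^ 2 + δ ^ 2)) =
      π * (q * (γ + δ) + p * (δ * a + γ * b)) / (γ * δ * ((a - b) ^ 2 + (γ + δ) ^ 2)) := by
  by_cases hD : (a - b) ^ 2 + (γ - δ) ^ 2 = 0
  · have h1 : a = b := by
      have : (a - b) ^ 2 = 0 := by nlinarith [sq_nonneg (a - b), sq_nonneg (γ - δ)]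
      have h := pow_eq_zero_iff (two_ne_zero (α := ℕ)) |>.mp this
      linarith [sub_eq_zero.mp h]
    have h2 : γ = δ := by
      have : (γ - δ) ^ 2 = 0 := by nlinarith [sq_nonneg (a - b), sq_nonneg (γ - δ)]
      have h := pow_eq_zero_iff (two_ne_zero (α := ℕ)) |>.mp this
      linarith [sub_eq_zero.mp h]
    subst h1; subst h2
    rw [key_deg p q a γ hγ]
    have hγ' := hγ.ne'
    field_simp
    ring
  · exact key_nondeg p q a b γ δ hγ hδ hD

noncomputable def cauchyPDF (a γ x : ℝ) : ℝ :=
  (1 / (π * γ)) * (γ ^ 2 / ((x - a) ^ 2 + γ ^ 2))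

/-- For `X ~ C(a,γ)` and `X₀ = (X - a₀)/γ₀` with `γ₀ > 0`:
`E(1/(1+X₀²)) = γ₀(γ+γ₀)/((a-a₀)² + (γ+γ₀)²)` and
`E(X₀/(1+X₀²)) = γ₀(a-a₀)/((a-a₀)² + (γ+γ₀)²)`. -/
theorem cauchy_expectation_shifted (a γ a₀ γ₀ : ℝ) (hγ : 0 < γ) (hγ₀ : 0 < γ₀) :
    (∫ x : ℝ, (1 / (1 + ((x - a₀) / γ₀) ^ 2)) * cauchyPDF a γ x =
        γ₀ * (γ + γ₀) / ((a - a₀) ^ 2 + (γ + γ₀) ^ 2)) ∧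
    (∫ x : ℝ, (((x - a₀) / γ₀) / (1 + ((x - a₀) / γ₀) ^ 2)) * cauchyPDF a γ x =
        γ₀ * (a - a₀) / ((a - a₀) ^ 2 + (γ + γ₀) ^ 2)) := by
  have hπ := Real.pi_ne_zero
  have hγ' := hγ.ne'
  have hγ₀' := hγ₀.ne'
  have hs1 : (0:ℝ) < (a - a₀) ^ 2 + (γ + γ₀) ^ 2 := by positivity
  constructor
  · have heq : (fun x : ℝ => (1 / (1 + ((x - a₀) / γ₀) ^ 2)) * cauchyPDF a γ x)
        = fun x : ℝ => ((0 : ℝ) * x + γ * γ₀ ^ 2 / π)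
          / (((x - a) ^ 2 + γ ^ 2) * ((x - a₀) ^ 2 + γ₀ ^ 2)) := by
      funext x
      have hP := (sq_add_pos a γ x hγ).ne'
      have hQ := (sq_add_pos a₀ γ₀ x hγ₀).ne'
      unfold cauchyPDF
      have h1 : (1 : ℝ) + ((x - a₀) / γ₀) ^ 2 ≠ 0 := by positivity
      field_simp
      ring
    rw [heq, key 0 (γ * γ₀ ^ 2 / π) a a₀ γ γ₀ hγ hγ₀]
    field_simp
    ring
  · have heq : (fun x : ℝ => (((x - a₀) / γ₀) / (1 + ((x - a₀) / γ₀) ^ 2)) * cauchyPDF a γ x)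
        = fun x : ℝ => (γ * γ₀ / π * x + -(a₀ * γ * γ₀) / π)
          / (((x - a) ^ 2 + γ ^ 2) * ((x - a₀) ^ 2 + γ₀ ^ 2)) := by
      funext x
      have hP := (sq_add_pos a γ x hγ).ne'
      have hQ := (sq_add_pos a₀ γ₀ x hγ₀).ne'
      unfold cauchyPDF
      have h1 : (1 : ℝ) + ((x - a₀) / γ₀) ^ 2 ≠ 0 := by positivity
      field_simp
      ring
    rw [heq, key (γ * γ₀ / π) (-(a₀ * γ * γ₀) / π) a a₀ γ γ₀ hγ hγ₀]
    field_simp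
    ring
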